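/- Let N and k be positive natural numbers, and let 0 ≤ δ < 0.624. Then there exist constants C > 0 and D > 0, depending only on δ, such that the following holds: for every matrix A ∈ ℂ^{N×N} whose 2k-th restricted isometry constant δ_{2k} satisfies δ_{2k} ≤ δ, every vector x̂ ∈ ℂ^N, every y ∈ ℂ^N and every η'' ≥ 0 with ‖A x̂ − y‖₂ ≤ √N·η'', any vector x̂* that solves the modified basis-pursuit problem min_{z ∈ ℂ^N} ‖z‖₁ subject to ‖A z − y‖₂ ≤ √N·η'' (i.e. ‖A x̂* − y‖₂ ≤ √N·η'' and ‖x̂*‖₁ ≤ ‖z‖₁ for every z ∈ ℂ^N with ‖A z − y‖₂ ≤ √N·η'') satisfies ‖x̂ − x̂*‖₁ ≤ C·σ_k(x̂)₁ + D·√(k·N)·η''. -/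

import Mathlib

open Finset

/-- The ℓ₁ norm of a vector in ℂ^N. -/
noncomputable def l1 {N : ℕ} (v : Fin N → ℂ) : ℝ := ∑ i, ‖v i‖

/-- The Euclidean (ℓ₂) norm of a vector in ℂ^N. -/
noncomputable def l2 {N : ℕ} (v : Fin N → ℂ) : ℝ := Real.sqrt (∑ i, ‖v i‖ ^ 2)

/-- The ℓ∞ (maximum-modulus) norm of a vector in ℂ^N. -/
noncomputable def linf {N : ℕ} (v : Fin N → ℂ) : ℝ := ⨆ i, ‖v i‖

/-- The number of nonzero entries of a vector (its "ℓ₀ norm"). -/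
noncomputable def l0 {N : ℕ} (v : Fin N → ℂ) : ℕ := (Finset.univ.filter fun i => v i ≠ 0).card

/-- The best k-term approximation error in ℓ₁ norm:
    σ_k(x)₁ = inf { ‖x − z‖₁ : z is k-sparse }. -/
noncomputable def sigma1 {N : ℕ} (k : ℕ) (x : Fin N → ℂ) : ℝ :=
  sInf {t : ℝ | ∃ z : Fin N → ℂ, l0 z ≤ k ∧ t = l1 (x - z)}

/-! ### Auxiliary machinery -/


noncomputable def aip {N : ℕ} (u w : Fin N → ℂ) : ℝ := ∑ i, ((starRingEnd ℂ) (u i) * w i).re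

lemma aip_self {N : ℕ} (v : Fin N → ℂ) : aip v v = ∑ i, ‖v i‖ ^ 2 := by
  unfold aip
  refine Finset.sum_congr rfl fun i _ => ?_
  simp [Complex.mul_re, Complex.conj_re, Complex.conj_im,
    Complex.sq_norm, Complex.normSq_apply]

lemma l2_sq {N : ℕ} (v : Fin N → ℂ) : l2 v ^ 2 = ∑ i, ‖v i‖ ^ 2 := by
  unfold l2
  exact Real.sq_sqrt (by positivity)

lemma l2_nonneg {N : ℕ} (v : Fin N → ℂ) : 0 ≤ l2 v := Real.sqrt_nonneg _

lemma aip_self_eq_l2sq {N : ℕ} (v : Fin N → ℂ) : aip v v = l2 v ^ 2 := by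
  rw [aip_self, l2_sq]

lemma l2_eq_sqrt_aip {N : ℕ} (v : Fin N → ℂ) : l2 v = Real.sqrt (aip v v) := by
  rw [aip_self]; rfl

lemma quad_disc (a b e : ℝ) (h : ∀ c : ℝ, 0 ≤ a + 2 * c * b + c ^ 2 * e) : b ^ 2 ≤ a * e := by
  have hd := discrim_le_zero (a := e) (b := 2 * b) (c := a) (fun x => by nlinarith [h x])
  unfold discrim at hd
  nlinarith

lemma aip_expand {N : ℕ} (p q : Fin N → ℂ) (c : ℝ) :
    aip (fun i => p i + (c : ℂ) * q i) (fun i => p i + (c : ℂ) * q i)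
      = aip p p + 2 * c * aip p q + c ^ 2 * aip q q := by
  unfold aip
  rw [Finset.mul_sum, Finset.mul_sum, ← Finset.sum_add_distrib, ← Finset.sum_add_distrib]
  refine Finset.sum_congr rfl fun i _ => ?_
  simp only [map_add, map_mul, Complex.conj_ofReal, Complex.add_re, Complex.add_im,
    Complex.mul_re, Complex.mul_im, Complex.ofReal_re, Complex.ofReal_im,
    Complex.conj_re, Complex.conj_im]
  ring

lemma aip_comm {N : ℕ} (u w : Fin N → ℂ) : aip u w = aip w u := by
  unfold aip
  refine Finset.sum_congr rfl fun i _ => ?_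
  simp only [Complex.mul_re, Complex.conj_re, Complex.conj_im]
  ring

lemma aip_sum_right {N : ℕ} (u : Fin N → ℂ) (s : Finset ℕ) (W : ℕ → Fin N → ℂ) :
    aip u (fun i => ∑ j ∈ s, W j i) = ∑ j ∈ s, aip u (W j) := by
  unfold aip
  simp_rw [Finset.mul_sum, Complex.re_sum]
  exact Finset.sum_comm

lemma aip_nonneg_self {N : ℕ} (v : Fin N → ℂ) : 0 ≤ aip v v := by
  rw [aip_self]; positivity

lemma abs_aip_le {N : ℕ} (u w : Fin N → ℂ) : |aip u w| ≤ l2 u * l2 w := by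
  have h : ∀ c : ℝ, 0 ≤ aip u u + 2 * c * aip u w + c ^ 2 * aip w w := by
    intro c
    rw [← aip_expand u w c]
    exact aip_nonneg_self _
  have hq := quad_disc _ _ _ h
  rw [aip_self_eq_l2sq, aip_self_eq_l2sq] at hq
  have hP : 0 ≤ l2 u * l2 w := mul_nonneg (l2_nonneg u) (l2_nonneg w)
  calc |aip u w| = Real.sqrt ((aip u w) ^ 2) := (Real.sqrt_sq_eq_abs _).symm
    _ ≤ Real.sqrt ((l2 u * l2 w) ^ 2) := Real.sqrt_le_sqrt (by nlinarith)
    _ = l2 u * l2 w := Real.sqrt_sq hP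

lemma aip_le {N : ℕ} (u w : Fin N → ℂ) : aip u w ≤ l2 u * l2 w :=
  le_trans (le_abs_self _) (abs_aip_le u w)

lemma neg_aip_le {N : ℕ} (u w : Fin N → ℂ) : -(l2 u * l2 w) ≤ aip u w :=
  neg_le_of_neg_le (le_trans (neg_le_abs _) (abs_aip_le u w))

lemma l2_sub_le {N : ℕ} (a b : Fin N → ℂ) : l2 (a - b) ≤ l2 a + l2 b := by
  have hab : (a - b) = fun i => a i + ((-1 : ℝ) : ℂ) * b i := by
    funext i; simp only [Pi.sub_apply]; push_cast; ring
  have h1 : l2 (a - b) ^ 2 ≤ (l2 a + l2 b) ^ 2 := by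
    rw [← aip_self_eq_l2sq, hab, aip_expand]
    have h2 := neg_aip_le a b
    rw [aip_self_eq_l2sq, aip_self_eq_l2sq]
    nlinarith [l2_nonneg a, l2_nonneg b]
  have h0 : 0 ≤ l2 a + l2 b := add_nonneg (l2_nonneg a) (l2_nonneg b)
  nlinarith [l2_nonneg (a - b)]

lemma l0_le_card {N : ℕ} (z : Fin N → ℂ) (T : Finset (Fin N))
    (h : ∀ i, z i ≠ 0 → i ∈ T) : l0 z ≤ T.card := by
  unfold l0
  exact Finset.card_le_card (fun i hi => h i (by simpa using hi))

/-- Cauchy–Schwarz for sums: `(∑ a)² ≤ card * ∑ a²`. -/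
lemma sum_sq_le_card_mul {ι : Type*} (T : Finset ι) (a : ι → ℝ) :
    (∑ i ∈ T, a i) ^ 2 ≤ (T.card : ℝ) * ∑ i ∈ T, (a i) ^ 2 := by
  have h : ∀ c : ℝ, 0 ≤ (∑ i ∈ T, (a i) ^ 2) + 2 * c * (-(∑ i ∈ T, a i)) + c ^ 2 * (T.card : ℝ) := by
    intro c
    have : (∑ i ∈ T, (a i - c) ^ 2) = (∑ i ∈ T, (a i) ^ 2) + 2 * c * (-(∑ i ∈ T, a i)) + c ^ 2 * (T.card : ℝ) := by
      rw [Finset.sum_congr rfl (fun i _ => by ring :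
        ∀ i ∈ T, (a i - c) ^ 2 = (a i) ^ 2 - (2 * c) * a i + c ^ 2)]
      rw [Finset.sum_add_distrib, Finset.sum_sub_distrib, ← Finset.mul_sum, Finset.sum_const,
        nsmul_eq_mul]
      ring
    rw [← this]
    positivity
  have := quad_disc _ _ _ h
  nlinarith
/-- Foucart–Rauhut Lemma 6.14 (√k-multiplied form). -/
lemma lem614 {ι : Type*} (k : ℕ) (hk : 0 < k) (T : Finset ι) (a : ι → ℝ)
    (mn mx : ℝ) (hmn0 : 0 ≤ mn) (hmnmx : mn ≤ mx) (hcard : T.card ≤ k)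
    (hr : ∀ i ∈ T, mn ≤ a i ∧ a i ≤ mx) (hfull : T.card = k ∨ mn = 0) :
    Real.sqrt k * Real.sqrt (∑ i ∈ T, (a i) ^ 2)
      ≤ (∑ i ∈ T, a i) + (k : ℝ) * (mx - mn) / 4 := by
  set s := ∑ i ∈ T, a i with hs
  set q := ∑ i ∈ T, (a i) ^ 2 with hq
  have hs0 : 0 ≤ s := Finset.sum_nonneg fun i hi => le_trans hmn0 (hr i hi).1
  have hq0 : 0 ≤ q := Finset.sum_nonneg fun i _ => sq_nonneg _
  have hkey : 0 ≤ (mx + mn) * s - q - (T.card : ℝ) * (mn * mx) := by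
    have h1 : 0 ≤ ∑ i ∈ T, (a i - mn) * (mx - a i) :=
      Finset.sum_nonneg fun i hi =>
        mul_nonneg (sub_nonneg.2 (hr i hi).1) (sub_nonneg.2 (hr i hi).2)
    have h2 : ∑ i ∈ T, (a i - mn) * (mx - a i)
        = (mx + mn) * s - q - (T.card : ℝ) * (mn * mx) := by
      rw [Finset.sum_congr rfl (fun i _ => by ring :
        ∀ i ∈ T, (a i - mn) * (mx - a i) = (mx + mn) * a i - (a i) ^ 2 - mn * mx)]
      rw [Finset.sum_sub_distrib, Finset.sum_sub_distrib, ← Finset.mul_sum,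
        Finset.sum_const, nsmul_eq_mul]
    linarith [h2 ▸ h1]
  have hR0 : 0 ≤ s + (k : ℝ) * (mx - mn) / 4 := by
    have : (0:ℝ) ≤ (k : ℝ) := Nat.cast_nonneg k
    nlinarith
  have hmain : (k : ℝ) * q ≤ (s + (k : ℝ) * (mx - mn) / 4) ^ 2 := by
    have hkR : (0:ℝ) ≤ (k : ℝ) := Nat.cast_nonneg k
    rcases hfull with hfull | hfull
    · rw [hfull] at hkey
      nlinarith [sq_nonneg (s - (k : ℝ) * (mx + 3 * mn) / 4),
        mul_nonneg hmn0 (sub_nonneg.2 hmnmx), mul_nonneg (mul_nonneg hkR hkR)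
          (mul_nonneg hmn0 (sub_nonneg.2 hmnmx))]
    · subst hfull
      have hcard' : (T.card : ℝ) ≤ (k : ℝ) := Nat.cast_le.2 hcard
      nlinarith [sq_nonneg (s - (k : ℝ) * mx / 4)]
  calc Real.sqrt k * Real.sqrt q = Real.sqrt ((k : ℝ) * q) :=
        (Real.sqrt_mul (Nat.cast_nonneg k) q).symm
    _ ≤ Real.sqrt ((s + (k : ℝ) * (mx - mn) / 4) ^ 2) := Real.sqrt_le_sqrt hmain
    _ = s + (k : ℝ) * (mx - mn) / 4 := Real.sqrt_sq hR0

/-- Sum over any set of ≤ k indices of an antitone nonneg function is at most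
the sum over the first k indices. -/
lemma sum_le_topk {N k : ℕ} (g : Fin N → ℝ)
    (hganti : ∀ r r' : Fin N, r ≤ r' → g r' ≤ g r) (hg0 : ∀ r, 0 ≤ g r)
    (R : Finset (Fin N)) (hR : R.card ≤ k) :
    ∑ r ∈ R, g r ≤ ∑ r ∈ Finset.univ.filter (fun r : Fin N => (r : ℕ) < k), g r := by
  classical
  set K := Finset.univ.filter (fun r : Fin N => (r : ℕ) < k) with hK
  have hsplitR := Finset.sum_inter_add_sum_sdiff R K g
  have hsplitK := Finset.sum_inter_add_sum_sdiff K R g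
  have hRK : ∑ r ∈ R ∩ K, g r = ∑ r ∈ K ∩ R, g r := by rw [Finset.inter_comm]
  -- suffices to bound the part of R outside K
  have hmain : ∑ r ∈ R \ K, g r ≤ ∑ r ∈ K \ R, g r := by
    rcases Finset.eq_empty_or_nonempty (R \ K) with he | hne
    · rw [he, Finset.sum_empty]
      exact Finset.sum_nonneg fun r _ => hg0 r
    · -- then k < N and K has card k
      obtain ⟨r0, hr0⟩ := hne
      have hr0R : r0 ∈ R := (Finset.mem_sdiff.1 hr0).1
      have hr0K : ¬ ((r0 : ℕ) < k) := by
        have := (Finset.mem_sdiff.1 hr0).2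
        simpa [hK] using this
      have hkN : k < N := lt_of_le_of_lt (not_lt.1 hr0K) r0.isLt
      have hNpos : 0 < N := lt_of_le_of_lt (Nat.zero_le _) r0.isLt
      have hcardK : K.card = k := by
        apply le_antisymm
        · rw [← Finset.card_range k]
          apply Finset.card_le_card_of_injOn (fun r : Fin N => (r : ℕ)) ?_ ?_
          · intro r hr
            simp only [Finset.mem_coe, hK, Finset.mem_filter] at hr
            simp only [Finset.mem_coe, Finset.mem_range]
            exact hr.2
          · intro x _ y _ hxy
            exact Fin.val_injective hxy
        · rw [← Finset.card_range k]
          apply Finset.card_le_card_of_injOn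
            (fun a : ℕ => (⟨a % N, Nat.mod_lt a hNpos⟩ : Fin N)) ?_ ?_
          · intro a ha
            have halt : a < k := by simpa using ha
            have haN : a < N := lt_trans halt hkN
            simp only [Finset.mem_coe, hK, Finset.mem_filter]
            refine ⟨Finset.mem_univ _, ?_⟩
            simpa [Nat.mod_eq_of_lt haN] using halt
          · intro x hx y hy hxy
            have hxk : x < k := by simpa using hx
            have hyk : y < k := by simpa using hy
            have hxN : x < N := lt_trans hxk hkN
            have hyN : y < N := lt_trans hyk hkN
            have := congrArg Fin.val hxy
            simpa [Nat.mod_eq_of_lt hxN, Nat.mod_eq_of_lt hyN] using this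
      have hcards : (R \ K).card ≤ (K \ R).card := by
        have h1 := Finset.card_inter_add_card_sdiff R K
        have h2 := Finset.card_inter_add_card_sdiff K R
        have h3 : (R ∩ K).card = (K ∩ R).card := by rw [Finset.inter_comm]
        omega
      have hKRne : (K \ R).Nonempty := by
        rw [← Finset.card_pos]
        have : 0 < (R \ K).card := Finset.card_pos.2 ⟨r0, hr0⟩
        omega
      obtain ⟨s0, hs0mem, hs0min⟩ := Finset.exists_min_image (K \ R) g hKRne
      have hs0k : (s0 : ℕ) < k := by
        have := (Finset.mem_sdiff.1 hs0mem).1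
        simp only [hK, Finset.mem_filter] at this
        exact this.2
      calc ∑ r ∈ R \ K, g r ≤ (R \ K).card • g s0 := by
            apply Finset.sum_le_card_nsmul
            intro r hr
            have hrk : ¬ ((r : ℕ) < k) := by
              have := (Finset.mem_sdiff.1 hr).2
              simpa [hK] using this
            exact hganti s0 r (by omega)
        _ ≤ (K \ R).card • g s0 := by
            rw [nsmul_eq_mul, nsmul_eq_mul]
            exact mul_le_mul_of_nonneg_right (Nat.cast_le.2 hcards) (hg0 s0)
        _ ≤ ∑ r ∈ K \ R, g r := Finset.card_nsmul_le_sum _ _ _ hs0min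
  linarith [hsplitR, hsplitK, hRK]
set_option maxHeartbeats 1000000 in
lemma nsp {N k : ℕ} (hN : 0 < N) (hk : 0 < k) {δ : ℝ} (hδ0 : 0 ≤ δ) (hδ : δ < 0.624)
    (A : Matrix (Fin N) (Fin N) ℂ)
    (hA : ∀ z : Fin N → ℂ, l0 z ≤ 2 * k →
      (1 - δ) * l2 z ^ 2 ≤ l2 (A.mulVec z) ^ 2 ∧ l2 (A.mulVec z) ^ 2 ≤ (1 + δ) * l2 z ^ 2)
    (v : Fin N → ℂ) :
    ∃ S : Finset (Fin N), S.card ≤ k ∧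
      (∀ T : Finset (Fin N), T.card ≤ k → ∑ i ∈ T, ‖v i‖ ≤ ∑ i ∈ S, ‖v i‖) ∧
      (∑ i ∈ S, ‖v i‖) * (Real.sqrt (1 - δ) * Real.sqrt (1 - δ ^ 2) - δ * Real.sqrt (1 - δ) / 4)
        ≤ Real.sqrt k * l2 (A.mulVec v) * Real.sqrt (1 - δ ^ 2)
          + δ * Real.sqrt (1 - δ) * (l1 v - ∑ i ∈ S, ‖v i‖) := by
  classical
  -- sorting permutation
  set σp : Equiv.Perm (Fin N) := Tuple.sort (fun i => -‖v i‖) with hσp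
  set g : Fin N → ℝ := fun r => ‖v (σp r)‖ with hg
  have hganti : ∀ r r' : Fin N, r ≤ r' → g r' ≤ g r := by
    intro r r' hrr
    have h1 := Tuple.monotone_sort (fun i : Fin N => -‖v i‖) hrr
    simp only [Function.comp_apply, ← hσp] at h1
    simp only [hg]
    linarith
  have hg0 : ∀ r, 0 ≤ g r := fun r => norm_nonneg _
  set rk : Fin N → ℕ := fun i => ((σp.symm i : Fin N) : ℕ) with hrk
  have hgrk : ∀ i, g (σp.symm i) = ‖v i‖ := by
    intro i; simp [hg]
  have hrklt : ∀ i, rk i < N := fun i => (σp.symm i).isLt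
  -- blocks
  set T : ℕ → Finset (Fin N) := fun j => Finset.univ.filter (fun i => rk i / k = j) with hT
  set u : ℕ → Fin N → ℂ := fun j i => if rk i / k = j then v i else 0 with hu
  have hmemT : ∀ j (i : Fin N), i ∈ T j ↔ rk i / k = j := by
    intro j i; simp [hT]
  have hblk : ∀ j (i : Fin N), i ∈ T j → j * k ≤ rk i ∧ rk i < j * k + k := by
    intro j i hi
    have hdiv : rk i / k = j := (hmemT j i).1 hi
    have h1 := Nat.div_add_mod (rk i) k
    have h2 := Nat.mod_lt (rk i) hk
    rw [hdiv] at h1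
    constructor
    · rw [mul_comm]
      exact Nat.le.intro h1
    · rw [mul_comm]
      calc rk i = k * j + rk i % k := h1.symm
        _ < k * j + k := Nat.add_lt_add_left h2 _
  have hcardT : ∀ j, (T j).card ≤ k := by
    intro j
    rw [← Finset.card_range k]
    apply Finset.card_le_card_of_injOn (fun i => rk i - j * k) ?_ ?_
    · intro i hi
      obtain ⟨hl, hr⟩ := hblk j i hi
      simp only [Finset.mem_coe, Finset.mem_range]
      omega
    · intro x hx y hy hxy
      obtain ⟨hlx, hrx⟩ := hblk j x hx
      obtain ⟨hly, hry⟩ := hblk j y hy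
      simp only at hxy
      have hrkeq : rk x = rk y := by omega
      have : σp.symm x = σp.symm y := Fin.val_injective hrkeq
      exact σp.symm.injective this
  have hcard_full : ∀ j, j * k + k ≤ N → (T j).card = k := by
    intro j hjk
    refine le_antisymm (hcardT j) ?_
    rw [← Finset.card_range k]
    apply Finset.card_le_card_of_injOn
      (fun a : ℕ => σp (⟨(j * k + a) % N, Nat.mod_lt _ hN⟩ : Fin N)) ?_ ?_
    · intro a ha
      have hak : a < k := Finset.mem_range.1 ha
      have haN : j * k + a < N := by omega
      rw [Finset.mem_coe, hmemT]
      have h1 : rk (σp (⟨(j * k + a) % N, Nat.mod_lt _ hN⟩ : Fin N)) = j * k + a := by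
        simp only [hrk, Equiv.symm_apply_apply]
        exact Nat.mod_eq_of_lt haN
      rw [h1, mul_comm j k, Nat.mul_add_div hk, Nat.div_eq_of_lt hak]
      omega
    · intro x hx y hy hxy
      have hxk : x < k := Finset.mem_range.1 hx
      have hyk : y < k := Finset.mem_range.1 hy
      have h1 := σp.injective hxy
      have h2 := congrArg Fin.val h1
      simp only [Nat.mod_eq_of_lt (show j * k + x < N by omega),
        Nat.mod_eq_of_lt (show j * k + y < N by omega)] at h2
      omega
  -- block envelope values
  set e : ℕ → ℝ := fun j => if h : j * k < N then g ⟨j * k, h⟩ else 0 with he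
  have he0 : ∀ j, 0 ≤ e j := by
    intro j
    simp only [he]
    split
    · exact hg0 _
    · exact le_refl 0
  have hee : ∀ j, e (j + 1) ≤ e j := by
    intro j
    by_cases h1 : (j + 1) * k < N
    · have h3 : j * k ≤ (j + 1) * k := Nat.mul_le_mul_right _ (by omega)
      have h2 : j * k < N := lt_of_le_of_lt h3 h1
      have ha : e (j + 1) = g ⟨(j + 1) * k, h1⟩ := dif_pos h1
      have hb : e j = g ⟨j * k, h2⟩ := dif_pos h2
      rw [ha, hb]
      exact hganti _ _ (by simp only [Fin.mk_le_mk]; exact h3)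
    · have ha : e (j + 1) = 0 := dif_neg h1
      rw [ha]; exact he0 j
  have hrange : ∀ j, ∀ i ∈ T j, e (j + 1) ≤ ‖v i‖ ∧ ‖v i‖ ≤ e j := by
    intro j i hi
    obtain ⟨hl, hr⟩ := hblk j i hi
    have hjkN : j * k < N := lt_of_le_of_lt hl (hrklt i)
    have hv : ‖v i‖ = g (σp.symm i) := (hgrk i).symm
    constructor
    · by_cases h2 : (j + 1) * k < N
      · have he1 : e (j + 1) = g ⟨(j + 1) * k, h2⟩ := dif_pos h2
        rw [he1, hv]
        apply hganti
        simp only [Fin.le_def]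
        have h5 : (j + 1) * k = j * k + k := by ring
        rw [h5]
        exact Nat.le_of_lt hr
      · have he1 : e (j + 1) = 0 := dif_neg h2
        rw [he1]; exact norm_nonneg _
    · have he1 : e j = g ⟨j * k, hjkN⟩ := dif_pos hjkN
      rw [he1, hv]
      apply hganti
      simp only [Fin.le_def]
      exact hl
  -- bridges
  have hul1 : ∀ j, l1 (u j) = ∑ i ∈ T j, ‖v i‖ := by
    intro j
    rw [hT]
    rw [Finset.sum_filter]
    show (∑ i, ‖u j i‖) = _
    refine Finset.sum_congr rfl fun i _ => ?_
    by_cases hc : rk i / k = j <;> simp [hu, hc]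
  have hul2 : ∀ j, l2 (u j) ^ 2 = ∑ i ∈ T j, ‖v i‖ ^ 2 := by
    intro j
    rw [l2_sq, hT, Finset.sum_filter]
    refine Finset.sum_congr rfl fun i _ => ?_
    by_cases hc : rk i / k = j <;> simp [hu, hc]
  have hvsum : v = ∑ j ∈ Finset.range N, u j := by
    funext i
    rw [Finset.sum_apply]
    have hj0 : rk i / k ∈ Finset.range N :=
      Finset.mem_range.2 (lt_of_le_of_lt (Nat.div_le_self _ _) (hrklt i))
    rw [Finset.sum_eq_single_of_mem _ hj0 ?_]
    · simp [hu]
    · intro b _ hb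
      simp only [hu]
      rw [if_neg (fun h => hb h.symm)]
  have hl1v : l1 v = ∑ j ∈ Finset.range N, l1 (u j) := by
    have hpt : ∀ i, ‖v i‖ = ∑ j ∈ Finset.range N, ‖u j i‖ := by
      intro i
      have hj0 : rk i / k ∈ Finset.range N :=
        Finset.mem_range.2 (lt_of_le_of_lt (Nat.div_le_self _ _) (hrklt i))
      rw [Finset.sum_eq_single_of_mem _ hj0 ?_]
      · simp [hu]
      · intro b _ hb
        have : u b i = 0 := by
          simp only [hu]
          rw [if_neg (fun h => hb h.symm)]
        simp [this]
    show (∑ i, ‖v i‖) = _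
    calc (∑ i, ‖v i‖) = ∑ i, ∑ j ∈ Finset.range N, ‖u j i‖ :=
          Finset.sum_congr rfl fun i _ => hpt i
      _ = ∑ j ∈ Finset.range N, ∑ i, ‖u j i‖ := Finset.sum_comm
      _ = ∑ j ∈ Finset.range N, l1 (u j) := rfl
  have hdisj : ∀ j, j ≠ 0 → aip (u 0) (u j) = 0 := by
    intro j hj
    unfold aip
    apply Finset.sum_eq_zero
    intro i _
    by_cases hc : rk i / k = 0
    · have : u j i = 0 := by simp only [hu]; rw [if_neg (by omega)]
      simp [this]
    · have : u 0 i = 0 := by simp only [hu]; rw [if_neg hc]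
      simp [this]
  have hl0u : ∀ j, l0 (u j) ≤ k := by
    intro j
    refine le_trans (l0_le_card (u j) (T j) ?_) (hcardT j)
    intro i hi
    rw [hmemT]
    by_contra hc
    exact hi (by simp only [hu]; rw [if_neg hc])
  have h2k : ∀ j, l0 (u j) ≤ 2 * k := fun j => le_trans (hl0u j) (by omega)
  -- numeric facts
  have hδ1 : δ < 1 := lt_trans hδ (by norm_num)
  have h1δ : (0:ℝ) < 1 - δ := by linarith
  have h1δ2 : (0:ℝ) < 1 - δ ^ 2 := by nlinarith
  set D1 : ℝ := Real.sqrt (1 - δ) with hD1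
  set S2 : ℝ := Real.sqrt (1 - δ ^ 2) with hS2
  have hD1pos : 0 < D1 := Real.sqrt_pos.2 h1δ
  have hS2pos : 0 < S2 := Real.sqrt_pos.2 h1δ2
  have hD1sq : D1 ^ 2 = 1 - δ := Real.sq_sqrt h1δ.le
  have hS2sq : S2 ^ 2 = 1 - δ ^ 2 := Real.sq_sqrt h1δ2.le
  have hcoef : 0 ≤ D1 * S2 - δ * D1 / 4 := by
    have h4 : δ / 4 ≤ S2 := by
      have : δ / 4 = Real.sqrt ((δ / 4) ^ 2) := (Real.sqrt_sq (by linarith)).symm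
      rw [this, hS2]
      apply Real.sqrt_le_sqrt
      nlinarith
    nlinarith [hD1pos.le]
  set t : ℝ := l2 (u 0) with hts
  set c : ℝ := l2 (A.mulVec v) with hcs
  have hcnn : 0 ≤ c := l2_nonneg _
  have htnn : 0 ≤ t := l2_nonneg _
  have hknn : (0:ℝ) ≤ Real.sqrt k := Real.sqrt_nonneg _
  have hksq : (Real.sqrt k) ^ 2 = (k:ℝ) := Real.sq_sqrt (Nat.cast_nonneg k)
  have hl1u0 : ∑ i ∈ T 0, ‖v i‖ ≤ Real.sqrt k * t := by
    have h1 : (∑ i ∈ T 0, ‖v i‖) ^ 2 ≤ (k:ℝ) * t ^ 2 := by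
      have h2 := sum_sq_le_card_mul (T 0) (fun i => ‖v i‖)
      have h3 : ((T 0).card : ℝ) ≤ (k : ℝ) := Nat.cast_le.2 (hcardT 0)
      have h4 : (0:ℝ) ≤ ∑ i ∈ T 0, ‖v i‖ ^ 2 :=
        Finset.sum_nonneg fun i _ => sq_nonneg _
      rw [hts, hul2 0]
      nlinarith
    have h5 : 0 ≤ ∑ i ∈ T 0, ‖v i‖ := Finset.sum_nonneg fun i _ => norm_nonneg _
    calc ∑ i ∈ T 0, ‖v i‖ = Real.sqrt ((∑ i ∈ T 0, ‖v i‖) ^ 2) := (Real.sqrt_sq h5).symm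
      _ ≤ Real.sqrt ((k:ℝ) * t ^ 2) := Real.sqrt_le_sqrt h1
      _ = Real.sqrt k * t := by
          rw [Real.sqrt_mul (Nat.cast_nonneg k), Real.sqrt_sq htnn]
  have hvnnS : ∑ i ∈ T 0, ‖v i‖ ≤ l1 v := by
    show _ ≤ ∑ i, ‖v i‖
    exact Finset.sum_le_sum_of_subset_of_nonneg (Finset.filter_subset _ _)
      (fun i _ _ => norm_nonneg _)
  have hSnn : 0 ≤ ∑ i ∈ T 0, ‖v i‖ := Finset.sum_nonneg fun i _ => norm_nonneg _
  refine ⟨T 0, hcardT 0, ?_, ?_⟩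
  · -- dominance
    intro R hR
    have h1 : ∑ i ∈ R, ‖v i‖ = ∑ r ∈ R.image σp.symm, g r := by
      rw [Finset.sum_image (fun x _ y _ hxy => σp.symm.injective hxy)]
      exact Finset.sum_congr rfl fun i _ => (hgrk i).symm
    have h2 : ∑ i ∈ T 0, ‖v i‖ = ∑ r ∈ Finset.univ.filter (fun r : Fin N => (r : ℕ) < k), g r := by
      have himg : (T 0).image σp.symm = Finset.univ.filter (fun r : Fin N => (r : ℕ) < k) := by
        ext r
        simp only [Finset.mem_image, Finset.mem_filter, Finset.mem_univ, true_and]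
        constructor
        · rintro ⟨i, hi, rfl⟩
          have := (hmemT 0 i).1 hi
          have := (Nat.div_eq_zero_iff.1 this).resolve_left (by omega)
          exact this
        · intro hr
          refine ⟨σp r, ?_, by simp⟩
          rw [hmemT]
          have : rk (σp r) = (r : ℕ) := by simp [hrk]
          rw [this]
          exact Nat.div_eq_zero_iff.2 (Or.inr hr)
      rw [← himg, Finset.sum_image (fun x _ y _ hxy => σp.symm.injective hxy)]
      exact Finset.sum_congr rfl fun i _ => (hgrk i).symm
    rw [h1, h2]
    apply sum_le_topk g hganti hg0
    rw [Finset.card_image_of_injective _ σp.symm.injective]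
    exact hR
  -- the RIP inequality
  rcases eq_or_lt_of_le htnn with ht0 | htpos
  · -- t = 0
    have hS0 : ∑ i ∈ T 0, ‖v i‖ = 0 := by
      have := hl1u0
      rw [← ht0] at this
      simp only [mul_zero] at this
      linarith
    rw [hS0]
    have hl1nn : (0:ℝ) ≤ l1 v := Finset.sum_nonneg fun i _ => norm_nonneg _
    have : (0:ℝ) ≤ Real.sqrt k * c * S2 := by positivity
    have : (0:ℝ) ≤ δ * D1 * (l1 v - 0) := by
      rw [sub_zero]
      exact mul_nonneg (mul_nonneg hδ0 hD1pos.le) hl1nn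
    nlinarith
  · -- main case t > 0
    set L : ℝ := l2 (A.mulVec (u 0)) with hL
    have hLnn : 0 ≤ L := l2_nonneg _
    have hu0 := hA (u 0) (h2k 0)
    rw [← hts, ← hL] at hu0
    have hPpos : 0 < L ^ 2 := lt_of_lt_of_le (mul_pos h1δ (pow_pos htpos 2)) hu0.1
    set α : ℝ := L ^ 2 - (1 - δ) * t ^ 2 with hα
    set β : ℝ := (1 + δ) * t ^ 2 - L ^ 2 with hβ
    have hαnn : 0 ≤ α := by rw [hα]; linarith [hu0.1]
    have hβnn : 0 ≤ β := by rw [hβ]; linarith [hu0.2]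
    -- cross-term bounds
    set Xf : ℕ → ℝ := fun j => aip (A.mulVec (u 0)) (A.mulVec (u j)) with hXf
    have hcross : ∀ j ∈ Finset.Ico 1 N, (Xf j) ^ 2 * t ^ 2
        ≤ α * β * (l2 (u j)) ^ 2 := by
      intro j hj
      simp only [hXf]
      have hj0 : j ≠ 0 := by
        have := (Finset.mem_Ico.1 hj).1
        omega
      set X : ℝ := aip (A.mulVec (u 0)) (A.mulVec (u j)) with hX
      set r : ℝ := l2 (u j) with hr
      have hrnn : 0 ≤ r := l2_nonneg _
      have huj := hA (u j) (h2k j)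
      rw [← hr] at huj
      set Rj : ℝ := l2 (A.mulVec (u j)) ^ 2 with hRj
      -- quadratic expansions
      have hquad : ∀ cc : ℝ,
          l2 (fun i => u 0 i + (cc:ℂ) * u j i) ^ 2 = t ^ 2 + cc ^ 2 * r ^ 2 ∧
          l2 (A.mulVec (fun i => u 0 i + (cc:ℂ) * u j i)) ^ 2 = L ^ 2 + 2 * cc * X + cc ^ 2 * Rj ∧
          l0 (fun i => u 0 i + (cc:ℂ) * u j i) ≤ 2 * k := by
        intro cc
        have hAz : A.mulVec (fun i => u 0 i + (cc:ℂ) * u j i)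
            = fun i => (A.mulVec (u 0)) i + (cc:ℂ) * (A.mulVec (u j)) i := by
          have hzdef : (fun i => u 0 i + (cc:ℂ) * u j i) = u 0 + (cc:ℝ) • u j := by
            funext i
            simp [Pi.add_apply, Pi.smul_apply, Complex.real_smul]
          rw [hzdef, Matrix.mulVec_add, Matrix.mulVec_smul]
          funext i
          simp [Pi.add_apply, Pi.smul_apply, Complex.real_smul]
        refine ⟨?_, ?_, ?_⟩
        · rw [← aip_self_eq_l2sq, aip_expand, hdisj j hj0, aip_self_eq_l2sq,
            aip_self_eq_l2sq, ← hts, ← hr]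
          ring
        · rw [← aip_self_eq_l2sq, hAz, aip_expand, aip_self_eq_l2sq, aip_self_eq_l2sq,
            ← hL, ← hRj, ← hX]
        · have hsub : ∀ i, (u 0 i + (cc:ℂ) * u j i) ≠ 0 → i ∈ T 0 ∪ T j := by
            intro i hi
            rw [Finset.mem_union, hmemT, hmemT]
            by_contra hcon
            push_neg at hcon
            have h1 : u 0 i = 0 := by simp only [hu]; rw [if_neg hcon.1]
            have h2 : u j i = 0 := by simp only [hu]; rw [if_neg hcon.2]
            rw [h1, h2] at hi
            simp at hi
          calc l0 _ ≤ (T 0 ∪ T j).card := l0_le_card _ _ hsub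
            _ ≤ (T 0).card + (T j).card := Finset.card_union_le _ _
            _ ≤ 2 * k := by have := hcardT 0; have := hcardT j; omega
      have hq1 : ∀ cc : ℝ, 0 ≤ α + 2 * cc * X + cc ^ 2 * (Rj - (1 - δ) * r ^ 2) := by
        intro cc
        obtain ⟨e1, e2, e3⟩ := hquad cc
        have hrip := (hA _ e3).1
        rw [e1, e2] at hrip
        rw [hα]
        linarith [hrip]
      have hq2 : ∀ cc : ℝ, 0 ≤ β + 2 * cc * (-X) + cc ^ 2 * ((1 + δ) * r ^ 2 - Rj) := by
        intro cc
        obtain ⟨e1, e2, e3⟩ := hquad cc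
        have hrip := (hA _ e3).2
        rw [e1, e2] at hrip
        rw [hβ]
        linarith [hrip]
      have hd1 : X ^ 2 ≤ α * (Rj - (1 - δ) * r ^ 2) := quad_disc _ _ _ hq1
      have hd2 : X ^ 2 ≤ β * ((1 + δ) * r ^ 2 - Rj) := by
        have h9 := quad_disc _ _ _ hq2
        calc X ^ 2 = (-X) ^ 2 := by ring
          _ ≤ β * ((1 + δ) * r ^ 2 - Rj) := h9
      rcases le_or_gt ((Rj - (1 - δ) * r ^ 2) * t ^ 2) (β * r ^ 2) with hcase | hcase
      · calc X ^ 2 * t ^ 2 ≤ (α * (Rj - (1 - δ) * r ^ 2)) * t ^ 2 :=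
              mul_le_mul_of_nonneg_right hd1 (sq_nonneg t)
          _ = α * ((Rj - (1 - δ) * r ^ 2) * t ^ 2) := by ring
          _ ≤ α * (β * r ^ 2) := mul_le_mul_of_nonneg_left hcase hαnn
          _ = α * β * r ^ 2 := by ring
      · have hyt : ((1 + δ) * r ^ 2 - Rj) * t ^ 2 ≤ α * r ^ 2 := by
          rw [hβ] at hcase
          rw [hα]
          linarith [hcase]
        calc X ^ 2 * t ^ 2 ≤ (β * ((1 + δ) * r ^ 2 - Rj)) * t ^ 2 :=
              mul_le_mul_of_nonneg_right hd2 (sq_nonneg t)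
          _ = β * (((1 + δ) * r ^ 2 - Rj) * t ^ 2) := by ring
          _ ≤ β * (α * r ^ 2) := mul_le_mul_of_nonneg_left hyt hβnn
          _ = α * β * r ^ 2 := by ring
    set W : ℝ := ∑ j ∈ Finset.Ico 1 N, l2 (u j) with hW
    have hWnn : 0 ≤ W := Finset.sum_nonneg fun j _ => l2_nonneg _
    have hαβnn : 0 ≤ α * β := mul_nonneg hαnn hβnn
    have hXabs : ∀ j ∈ Finset.Ico 1 N,
        -(Xf j) * t ≤ Real.sqrt (α * β) * l2 (u j) := by
      intro j hj
      have h1 := hcross j hj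
      have hrhs : (Real.sqrt (α * β) * l2 (u j)) ^ 2 = α * β * (l2 (u j)) ^ 2 := by
        rw [mul_pow, Real.sq_sqrt hαβnn]
      have h2 : (Xf j * t) ^ 2 ≤ (Real.sqrt (α * β) * l2 (u j)) ^ 2 := by
        rw [hrhs]
        calc (Xf j * t) ^ 2 = (Xf j) ^ 2 * t ^ 2 := by ring
          _ ≤ _ := h1
      have hrhsnn : 0 ≤ Real.sqrt (α * β) * l2 (u j) :=
        mul_nonneg (Real.sqrt_nonneg _) (l2_nonneg _)
      calc -(Xf j) * t = -(Xf j * t) := by ring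
        _ ≤ |Xf j * t| := neg_le_abs _
        _ = Real.sqrt ((Xf j * t) ^ 2) := (Real.sqrt_sq_eq_abs _).symm
        _ ≤ Real.sqrt ((Real.sqrt (α * β) * l2 (u j)) ^ 2) := Real.sqrt_le_sqrt h2
        _ = Real.sqrt (α * β) * l2 (u j) := Real.sqrt_sq hrhsnn
    have hsumX : -(∑ j ∈ Finset.Ico 1 N, Xf j) * t ≤ Real.sqrt (α * β) * W := by
      have h1 : -(∑ j ∈ Finset.Ico 1 N, Xf j) * t
          = ∑ j ∈ Finset.Ico 1 N, (-(Xf j) * t) := by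
        rw [← Finset.sum_neg_distrib, Finset.sum_mul]
      rw [h1, hW, Finset.mul_sum]
      exact Finset.sum_le_sum hXabs
    have hsplit : Finset.range N = insert 0 (Finset.Ico 1 N) := by
      ext x
      simp only [Finset.mem_range, Finset.mem_insert, Finset.mem_Ico]
      omega
    have hiden : aip (A.mulVec (u 0)) (A.mulVec v) = L ^ 2 + ∑ j ∈ Finset.Ico 1 N, Xf j := by
      have hAv : A.mulVec v = fun i => ∑ j ∈ Finset.range N, (A.mulVec (u j)) i := by
        have h0 : A.mulVec v = A.mulVec (∑ j ∈ Finset.range N, u j) := by rw [← hvsum]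
        rw [h0, ← Matrix.mulVecLin_apply, map_sum]
        funext i
        rw [Finset.sum_apply]
        simp [Matrix.mulVecLin_apply]
      rw [hAv, aip_sum_right, hsplit, Finset.sum_insert (by simp)]
      rw [aip_self_eq_l2sq, ← hL]
    have hCS : aip (A.mulVec (u 0)) (A.mulVec v) ≤ L * c := by
      have h0 := aip_le (A.mulVec (u 0)) (A.mulVec v)
      rw [← hL, ← hcs] at h0
      exact h0
    have hchain : L ^ 2 * t ≤ L * c * t + Real.sqrt (α * β) * W := by
      have h1 : L ^ 2 = aip (A.mulVec (u 0)) (A.mulVec v) - ∑ j ∈ Finset.Ico 1 N, Xf j := by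
        linarith [hiden]
      calc L ^ 2 * t
          = aip (A.mulVec (u 0)) (A.mulVec v) * t + (-(∑ j ∈ Finset.Ico 1 N, Xf j) * t) := by
            rw [h1]; ring
        _ ≤ L * c * t + Real.sqrt (α * β) * W :=
            add_le_add (mul_le_mul_of_nonneg_right hCS htpos.le) hsumX
    have hαβS2 : Real.sqrt (α * β) * S2 ≤ δ * L ^ 2 := by
      have hin : (α * β) * (1 - δ ^ 2) ≤ (δ * L ^ 2) ^ 2 := by
        rw [hα, hβ]
        linarith [sq_nonneg (L ^ 2 - (1 - δ ^ 2) * t ^ 2)]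
      calc Real.sqrt (α * β) * S2 = Real.sqrt ((α * β) * (1 - δ ^ 2)) := by
            rw [hS2, ← Real.sqrt_mul hαβnn]
        _ ≤ Real.sqrt ((δ * L ^ 2) ^ 2) := Real.sqrt_le_sqrt hin
        _ = δ * L ^ 2 := Real.sqrt_sq (mul_nonneg hδ0 (sq_nonneg L))
    have htL : t * D1 ≤ L := by
      have h1 : (t * D1) ^ 2 ≤ L ^ 2 := by
        rw [mul_pow, hD1sq]
        linarith [hu0.1]
      calc t * D1 = Real.sqrt ((t * D1) ^ 2) :=
            (Real.sqrt_sq (mul_nonneg htpos.le hD1pos.le)).symm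
        _ ≤ Real.sqrt (L ^ 2) := Real.sqrt_le_sqrt h1
        _ = L := Real.sqrt_sq hLnn
    have hcore : t * D1 * S2 ≤ c * S2 + δ * W * D1 := by
      have h2 : L ^ 2 * (t * D1 * S2) ≤ L ^ 2 * (c * S2 + δ * W * D1) := by
        have e1 : L ^ 2 * t * D1 * S2 ≤ (L * c * t + Real.sqrt (α * β) * W) * (D1 * S2) := by
          calc L ^ 2 * t * D1 * S2 = (L ^ 2 * t) * (D1 * S2) := by ring
            _ ≤ (L * c * t + Real.sqrt (α * β) * W) * (D1 * S2) :=
                mul_le_mul_of_nonneg_right hchain (mul_nonneg hD1pos.le hS2pos.le)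
        have e2 : L * c * t * D1 ≤ L * L * c := by
          calc L * c * t * D1 = (L * c) * (t * D1) := by ring
            _ ≤ (L * c) * L := mul_le_mul_of_nonneg_left htL (mul_nonneg hLnn hcnn)
            _ = L * L * c := by ring
        have e2' := mul_le_mul_of_nonneg_right e2 hS2pos.le
        have e3 : (Real.sqrt (α * β) * S2) * (W * D1) ≤ (δ * L ^ 2) * (W * D1) :=
          mul_le_mul_of_nonneg_right hαβS2 (mul_nonneg hWnn hD1pos.le)
        linarith [e1, e2', e3]
      exact le_of_mul_le_mul_left h2 hPpos
    -- block ℓ2 bounds via lem614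
    have h614 : ∀ j ∈ Finset.Ico 1 N, Real.sqrt k * l2 (u j)
        ≤ (∑ i ∈ T j, ‖v i‖) + (k : ℝ) * (e j - e (j + 1)) / 4 := by
      intro j _
      have hl2j : l2 (u j) = Real.sqrt (∑ i ∈ T j, ‖v i‖ ^ 2) := by
        rw [← Real.sqrt_sq (l2_nonneg (u j)), hul2 j]
      rw [hl2j]
      refine lem614 k hk (T j) (fun i => ‖v i‖) (e (j + 1)) (e j) (he0 _) (hee j) (hcardT j)
        (fun i hi => hrange j i hi) ?_
      by_cases hfj : j * k + k ≤ N
      · exact Or.inl (hcard_full j hfj)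
      · refine Or.inr (dif_neg ?_)
        intro hcon
        have h9 : (j + 1) * k = j * k + k := by ring
        rw [h9] at hcon
        exact hfj (le_of_lt hcon)
    have hsum614 : Real.sqrt k * W ≤ (∑ j ∈ Finset.Ico 1 N, ∑ i ∈ T j, ‖v i‖)
        + (k : ℝ) / 4 * (∑ j ∈ Finset.Ico 1 N, (e j - e (j + 1))) := by
      rw [hW, Finset.mul_sum]
      calc ∑ j ∈ Finset.Ico 1 N, Real.sqrt k * l2 (u j)
          ≤ ∑ j ∈ Finset.Ico 1 N, ((∑ i ∈ T j, ‖v i‖) + (k : ℝ) * (e j - e (j + 1)) / 4) :=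
            Finset.sum_le_sum h614
        _ = _ := by
            rw [Finset.sum_add_distrib]
            congr 1
            rw [Finset.mul_sum]
            exact Finset.sum_congr rfl fun j _ => by ring
    have htel : ∑ j ∈ Finset.Ico 1 N, (e j - e (j + 1)) = e 1 - e N := by
      rw [Finset.sum_Ico_eq_sum_range]
      have h3 : ∑ x ∈ Finset.range (N - 1), (e (1 + x) - e (1 + x + 1))
          = e (1 + 0) - e (1 + (N - 1)) := Finset.sum_range_sub' (fun y => e (1 + y)) (N - 1)
      calc ∑ x ∈ Finset.range (N - 1), (e (1 + x) - e (1 + x + 1))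
          = e (1 + 0) - e (1 + (N - 1)) := h3
        _ = e 1 - e N := by
            have h4 : 1 + (N - 1) = N := by omega
            rw [h4]
    have hl1parts : ∑ j ∈ Finset.Ico 1 N, ∑ i ∈ T j, ‖v i‖ = l1 v - ∑ i ∈ T 0, ‖v i‖ := by
      have h1 := hl1v
      rw [hsplit, Finset.sum_insert (by simp)] at h1
      rw [Finset.sum_congr rfl (fun j (_ : j ∈ Finset.Ico 1 N) => hul1 j), hul1 0] at h1
      linarith
    have he1t : (k : ℝ) * e 1 ≤ Real.sqrt k * t := by
      by_cases hkN : k < N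
      · have h1k : 1 * k < N := by omega
        have hsq : (k : ℝ) * (e 1) ^ 2 ≤ t ^ 2 := by
          have hcard0 : (T 0).card = k := hcard_full 0 (by omega)
          have h3 : ∀ i ∈ T 0, (e 1) ^ 2 ≤ ‖v i‖ ^ 2 := by
            intro i hi
            have h4 := (hrange 0 i hi).1
            have h5 := he0 1
            exact pow_le_pow_left₀ h5 h4 2
          rw [hts, hul2 0]
          calc (k : ℝ) * (e 1) ^ 2 = ((T 0).card : ℝ) * (e 1) ^ 2 := by rw [hcard0]
            _ ≤ ∑ i ∈ T 0, ‖v i‖ ^ 2 := by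
                rw [← nsmul_eq_mul]
                exact Finset.card_nsmul_le_sum _ _ _ h3
        have he1nn : 0 ≤ e 1 := he0 1
        have h6 : ((k : ℝ) * e 1) ^ 2 ≤ (Real.sqrt k * t) ^ 2 := by
          rw [mul_pow, mul_pow, hksq]
          calc (k : ℝ) ^ 2 * (e 1) ^ 2 = (k : ℝ) * ((k : ℝ) * (e 1) ^ 2) := by ring
            _ ≤ (k : ℝ) * t ^ 2 := mul_le_mul_of_nonneg_left hsq (Nat.cast_nonneg k)
        calc (k : ℝ) * e 1 = Real.sqrt (((k : ℝ) * e 1) ^ 2) :=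
              (Real.sqrt_sq (mul_nonneg (Nat.cast_nonneg k) he1nn)).symm
          _ ≤ Real.sqrt ((Real.sqrt k * t) ^ 2) := Real.sqrt_le_sqrt h6
          _ = Real.sqrt k * t := Real.sqrt_sq (mul_nonneg hknn htpos.le)
      · have he1 : e 1 = 0 := dif_neg (by omega)
        rw [he1, mul_zero]
        exact mul_nonneg hknn htpos.le
    have hWb : Real.sqrt k * W ≤ (l1 v - ∑ i ∈ T 0, ‖v i‖) + Real.sqrt k * t / 4 := by
      have h1 := hsum614
      rw [htel, hl1parts] at h1
      have h3 := he0 N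
      have h5 : (0:ℝ) ≤ (k : ℝ) := Nat.cast_nonneg k
      have h4 : (k : ℝ) / 4 * (e 1 - e N) ≤ (k : ℝ) / 4 * e 1 := by
        linarith [mul_nonneg h5 h3]
      linarith [he1t]
    -- final assembly
    have hfin1 := mul_le_mul_of_nonneg_left hcore hknn
    have hfin2 := mul_le_mul_of_nonneg_left hWb (mul_nonneg hδ0 hD1pos.le)
    have hfin3 := mul_le_mul_of_nonneg_right hl1u0 hcoef
    linarith [hfin1, hfin2, hfin3]

set_option maxHeartbeats 1000000 in
/-- Performance bound of the modified basis pursuit against an ℓ∞ attack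
(ℓ₁-error bound). If the 2k-th restricted isometry constant of A is at most
δ < 0.624, then any minimizer xhat* of ‖z‖₁ subject to ‖Az − y‖₂ ≤ √N η''
satisfies ‖xhat − xhat*‖₁ ≤ C σ_k(xhat)₁ + D √(kN) η''. -/
theorem modified_basis_pursuit_linf_attack_l1_bound
    (N k : ℕ) (hN : 0 < N) (hk : 0 < k) (δ : ℝ) (hδ0 : 0 ≤ δ) (hδ : δ < 0.624) :
    ∃ C D : ℝ, 0 < C ∧ 0 < D ∧
      ∀ (A : Matrix (Fin N) (Fin N) ℂ),
        (∀ z : Fin N → ℂ, l0 z ≤ 2 * k →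
          (1 - δ) * l2 z ^ 2 ≤ l2 (A.mulVec z) ^ 2 ∧
            l2 (A.mulVec z) ^ 2 ≤ (1 + δ) * l2 z ^ 2) →
        ∀ (xhat y : Fin N → ℂ) (η'' : ℝ), 0 ≤ η'' →
          l2 (A.mulVec xhat - y) ≤ Real.sqrt N * η'' →
          ∀ xhatstar : Fin N → ℂ,
            l2 (A.mulVec xhatstar - y) ≤ Real.sqrt N * η'' →
            (∀ z : Fin N → ℂ, l2 (A.mulVec z - y) ≤ Real.sqrt N * η'' → l1 xhatstar ≤ l1 z) →
            l1 (xhat - xhatstar) ≤ C * sigma1 k xhat + D * Real.sqrt (k * N) * η'' := by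
  classical
  have hδ1 : δ < 1 := lt_trans hδ (by norm_num)
  have h1δ : (0:ℝ) < 1 - δ := by linarith
  have h1δ2 : (0:ℝ) < 1 - δ ^ 2 := by nlinarith
  set D1 : ℝ := Real.sqrt (1 - δ) with hD1
  set S2 : ℝ := Real.sqrt (1 - δ ^ 2) with hS2
  have hD1pos : 0 < D1 := Real.sqrt_pos.2 h1δ
  have hS2pos : 0 < S2 := Real.sqrt_pos.2 h1δ2
  have hS2sq : S2 ^ 2 = 1 - δ ^ 2 := Real.sq_sqrt h1δ2.le
  have hgap : 0 < D1 * S2 - δ * D1 / 4 - δ * D1 := by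
    have h54 : (5/4 : ℝ) * δ < S2 := by
      have h1 : ((5/4 : ℝ) * δ) ^ 2 < 1 - δ ^ 2 := by nlinarith
      calc (5/4 : ℝ) * δ = Real.sqrt (((5/4 : ℝ) * δ) ^ 2) :=
            (Real.sqrt_sq (by linarith)).symm
        _ < S2 := by
            rw [hS2]
            exact Real.sqrt_lt_sqrt (sq_nonneg _) h1
    nlinarith [hD1pos]
  set gap : ℝ := D1 * S2 - δ * D1 / 4 - δ * D1 with hgapdef
  have hδD1 : 0 ≤ δ * D1 := mul_nonneg hδ0 hD1pos.le
  refine ⟨2 + 4 * δ * D1 / gap, 4 * S2 / gap, ?_, ?_, ?_⟩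
  · have h1 : 0 ≤ 4 * δ * D1 / gap := div_nonneg (by linarith) hgap.le
    linarith
  · exact div_pos (by linarith) hgap
  intro A hA xhat y η'' hη hfeas xs hfeas' hmin
  set h : Fin N → ℂ := xhat - xs with hh
  have hAh : A.mulVec h = (A.mulVec xhat - y) - (A.mulVec xs - y) := by
    rw [hh, Matrix.mulVec_sub, sub_sub_sub_cancel_right]
  have hc2 : l2 (A.mulVec h) ≤ 2 * (Real.sqrt N * η'') := by
    rw [hAh]
    calc l2 ((A.mulVec xhat - y) - (A.mulVec xs - y))
        ≤ l2 (A.mulVec xhat - y) + l2 (A.mulVec xs - y) := l2_sub_le _ _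
      _ ≤ Real.sqrt N * η'' + Real.sqrt N * η'' := add_le_add hfeas hfeas'
      _ = 2 * (Real.sqrt N * η'') := by ring
  obtain ⟨S, hScard, hSdom, hSineq⟩ := nsp hN hk hδ0 hδ A hA h
  obtain ⟨S', hS'card, hS'dom, -⟩ := nsp hN hk hδ0 hδ A hA xhat
  rw [← hD1, ← hS2] at hSineq
  set σ0 : ℝ := l1 xhat - ∑ i ∈ S', ‖xhat i‖ with hσ0
  have hsubl1 : ∀ (w : Fin N → ℂ) (U : Finset (Fin N)), ∑ i ∈ U, ‖w i‖ ≤ l1 w := by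
    intro w U
    show _ ≤ ∑ i, ‖w i‖
    exact Finset.sum_le_sum_of_subset_of_nonneg (Finset.subset_univ _)
      (fun _ _ _ => norm_nonneg _)
  have hσ0nn : 0 ≤ σ0 := by
    rw [hσ0]
    linarith [hsubl1 xhat S']
  have hσsig : σ0 ≤ sigma1 k xhat := by
    rw [sigma1]
    apply le_csInf
    · exact ⟨l1 (xhat - 0), 0, by simp [l0], rfl⟩
    · rintro b ⟨z, hz, rfl⟩
      set Tz : Finset (Fin N) := Finset.univ.filter (fun i => z i ≠ 0) with hTz
      have hTzcard : Tz.card ≤ k := hz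
      have h1 : ∑ i ∈ Tz, ‖xhat i‖ ≤ ∑ i ∈ S', ‖xhat i‖ := hS'dom Tz hTzcard
      have h2 : ∑ i ∈ Tzᶜ, ‖xhat i‖ ≤ l1 (xhat - z) := by
        have h3 : ∀ i ∈ Tzᶜ, ‖xhat i‖ = ‖(xhat - z) i‖ := by
          intro i hi
          have h4 : z i = 0 := by
            have := Finset.mem_compl.1 hi
            simpa [hTz] using this
          simp [Pi.sub_apply, h4]
        rw [Finset.sum_congr rfl h3]
        exact hsubl1 _ _
      have h5 : ∑ i ∈ Tz, ‖xhat i‖ + ∑ i ∈ Tzᶜ, ‖xhat i‖ = l1 xhat :=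
        Finset.sum_add_sum_compl Tz _
      rw [hσ0]
      linarith
  have hl1xs : l1 xs ≤ l1 xhat := hmin xhat hfeas
  -- cone condition
  have hcone1 : ∑ i ∈ S'ᶜ, ‖h i‖ ≤ ∑ i ∈ S', ‖h i‖ + 2 * σ0 := by
    have e3 : xs = xhat - h := by
      funext i
      simp [hh, Pi.sub_apply]
    have e4 : l1 xs = ∑ i ∈ S', ‖(xhat - h) i‖ + ∑ i ∈ S'ᶜ, ‖(xhat - h) i‖ := by
      rw [e3]
      exact (Finset.sum_add_sum_compl S' _).symm
    have e5 : ∑ i ∈ S', ‖xhat i‖ + ∑ i ∈ S'ᶜ, ‖xhat i‖ = l1 xhat :=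
      Finset.sum_add_sum_compl S' _
    have e6 : ∑ i ∈ S', ‖xhat i‖ - ∑ i ∈ S', ‖h i‖ ≤ ∑ i ∈ S', ‖(xhat - h) i‖ := by
      rw [← Finset.sum_sub_distrib]
      refine Finset.sum_le_sum fun i _ => ?_
      have := norm_sub_norm_le (xhat i) (h i)
      simpa [Pi.sub_apply] using this
    have e7 : ∑ i ∈ S'ᶜ, ‖h i‖ - ∑ i ∈ S'ᶜ, ‖xhat i‖ ≤ ∑ i ∈ S'ᶜ, ‖(xhat - h) i‖ := by
      rw [← Finset.sum_sub_distrib]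
      refine Finset.sum_le_sum fun i _ => ?_
      have h8 := norm_sub_norm_le (h i) (xhat i)
      have h9 : ‖h i - xhat i‖ = ‖(xhat - h) i‖ := by
        rw [Pi.sub_apply, norm_sub_rev]
      linarith
    rw [hσ0]
    linarith
  have htrans1 : ∑ i ∈ S', ‖h i‖ ≤ ∑ i ∈ S, ‖h i‖ := hSdom S' hS'card
  have hsplith : l1 h = ∑ i ∈ S', ‖h i‖ + ∑ i ∈ S'ᶜ, ‖h i‖ :=
    (Finset.sum_add_sum_compl S' _).symm
  have hLc : l1 h - ∑ i ∈ S, ‖h i‖ ≤ ∑ i ∈ S, ‖h i‖ + 2 * σ0 := by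
    linarith [htrans1, hcone1, hsplith]
  have hSnn2 : 0 ≤ ∑ i ∈ S, ‖h i‖ := Finset.sum_nonneg fun i _ => norm_nonneg _
  have hkey : (∑ i ∈ S, ‖h i‖) * gap
      ≤ Real.sqrt k * l2 (A.mulVec h) * S2 + 2 * (δ * D1) * σ0 := by
    have h9 := mul_le_mul_of_nonneg_left hLc hδD1
    rw [hgapdef]
    nlinarith [hSineq, h9]
  have hck : Real.sqrt k * l2 (A.mulVec h) * S2
      ≤ 2 * (Real.sqrt ((k:ℝ) * (N:ℝ)) * η'') * S2 := by
    have h1 : (0:ℝ) ≤ Real.sqrt k := Real.sqrt_nonneg _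
    have h3 : Real.sqrt ((k:ℝ) * (N:ℝ)) = Real.sqrt k * Real.sqrt N :=
      Real.sqrt_mul (Nat.cast_nonneg k) _
    calc Real.sqrt k * l2 (A.mulVec h) * S2
        ≤ Real.sqrt k * (2 * (Real.sqrt N * η'')) * S2 := by
          exact mul_le_mul_of_nonneg_right (mul_le_mul_of_nonneg_left hc2 h1) hS2pos.le
      _ = 2 * ((Real.sqrt k * Real.sqrt N) * η'') * S2 := by ring
      _ = 2 * (Real.sqrt ((k:ℝ) * (N:ℝ)) * η'') * S2 := by rw [h3]
  have hgoal1 : l1 h ≤ 2 * (∑ i ∈ S, ‖h i‖) + 2 * σ0 := by linarith [hLc]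
  have hC0 : (0:ℝ) ≤ 2 + 4 * δ * D1 / gap := by
    have h1 : 0 ≤ 4 * δ * D1 / gap := div_nonneg (by linarith) hgap.le
    linarith
  -- final multiplication by gap
  have hfinal : l1 h * gap
      ≤ ((2 + 4 * δ * D1 / gap) * sigma1 k xhat
          + 4 * S2 / gap * Real.sqrt ((k:ℝ) * (N:ℝ)) * η'') * gap := by
    have e1 : 4 * δ * D1 / gap * gap = 4 * δ * D1 := div_mul_cancel₀ _ (ne_of_gt hgap)
    have e2 : 4 * S2 / gap * gap = 4 * S2 := div_mul_cancel₀ _ (ne_of_gt hgap)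
    have p1 : σ0 * gap ≤ sigma1 k xhat * gap :=
      mul_le_mul_of_nonneg_right hσsig hgap.le
    have p2 : 4 * (δ * D1) * σ0 ≤ 4 * (δ * D1) * sigma1 k xhat :=
      mul_le_mul_of_nonneg_left hσsig (by linarith)
    have p3 : l1 h * gap ≤ (2 * (∑ i ∈ S, ‖h i‖) + 2 * σ0) * gap :=
      mul_le_mul_of_nonneg_right hgoal1 hgap.le
    have hrhs : ((2 + 4 * δ * D1 / gap) * sigma1 k xhat
          + 4 * S2 / gap * Real.sqrt ((k:ℝ) * (N:ℝ)) * η'') * gap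
        = 2 * sigma1 k xhat * gap + 4 * (δ * D1) * sigma1 k xhat
          + 4 * S2 * Real.sqrt ((k:ℝ) * (N:ℝ)) * η'' := by
      field_simp
    rw [hrhs]
    nlinarith [hkey, hck, p1, p2, p3]
  have hmain := le_of_mul_le_mul_right (le_trans hfinal (le_of_eq rfl)) hgap
  exact hmain
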